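/- If pν > 1 (equivalently s_h > 2), then for every x ∈ X the integral ∫_0^∞ p(t,x,x) dt converges and equals p(ν−1)/(pν−1), and lim_{λ→0+} R_λ(x,x) = p(ν−1)/(pν−1); if pν ≤ 1 (equivalently s_h ≤ 2), then R_λ(x,x) → +∞ as λ → 0+. In other words, the hierarchical random walk is transient for s_h > 2 and recurrent for s_h ≤ 2. -/

import Mathlib

noncomputable section
open scoped ENNReal
open MeasureTheory Filter

def HX (ν : ℕ) : Type := {x : ℕ → Fin ν // ∃ N, ∀ n, N ≤ n → (x n : ℕ) = 0}
instance (ν : ℕ) : DecidableEq (HX ν) := Classical.decEq _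
abbrev Hl2 (ν : ℕ) : Type := lp (fun _ : HX ν => ℝ) 2
def cube (ν : ℕ) (r : ℕ) (x : HX ν) : Set (HX ν) := {y | ∀ n, r ≤ n → y.1 n = x.1 n}
def hdelta (ν : ℕ) (x : HX ν) : Hl2 ν := lp.single 2 x 1
def cubeSum (ν r : ℕ) (x : HX ν) (ψ : Hl2 ν) : ℝ := ∑' y : cube ν r x, ψ y
def IsHierLap (ν : ℕ) (p : ℝ) (Δ : Hl2 ν →L[ℝ] Hl2 ν) : Prop :=
  ∀ ψ x, Δ ψ x = ∑' r : ℕ,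
    (1 - p) * p ^ r * (((ν : ℝ) ^ (r + 1))⁻¹ * cubeSum ν (r + 1) x ψ - ψ x)
/-- Spectral dimension `s_h = 2 ln ν / ln(1/p)`. -/
def sh (ν : ℕ) (p : ℝ) : ℝ := 2 * Real.log ν / Real.log (1 / p)
/-- Heat kernel `p(t,x,y) = ⟨exp(tΔ_h) δ_y, δ_x⟩`. -/
def heatK (ν : ℕ) (Δ : Hl2 ν →L[ℝ] Hl2 ν) (t : ℝ) (x y : HX ν) : ℝ :=
  @inner ℝ _ _ (NormedSpace.exp (t • Δ) (hdelta ν y)) (hdelta ν x)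
/-- Resolvent kernel `R_λ(x,y) = ⟨(λI − Δ_h)⁻¹ δ_y, δ_x⟩`. -/
def resolvK (ν : ℕ) (Δ : Hl2 ν →L[ℝ] Hl2 ν) (lam : ℝ) (x y : HX ν) : ℝ :=
  @inner ℝ _ _ (Ring.inverse (lam • (1 : Hl2 ν →L[ℝ] Hl2 ν) - Δ) (hdelta ν y)) (hdelta ν x)
namespace HL
attribute [local instance] Classical.propDecidable

variable {ν : ℕ}

lemma HXext {x y : HX ν} (h : ∀ n, x.1 n = y.1 n) : x = y := Subtype.ext (funext h)

lemma self_mem_cube (r : ℕ) (x : HX ν) : x ∈ cube ν r x := fun _ _ => rfl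

lemma cube_mono {r s : ℕ} (h : r ≤ s) (x : HX ν) : cube ν r x ⊆ cube ν s x :=
  fun _ hy n hn => hy n (h.trans hn)

def cubeFun (r : ℕ) (x : HX ν) (g : Fin r → Fin ν) : HX ν :=
  ⟨fun n => if h : n < r then g ⟨n, h⟩ else x.1 n, by
    obtain ⟨N, hN⟩ := x.2
    refine ⟨max N r, fun n hn => ?_⟩
    simp only [dif_neg (by omega : ¬ n < r)]
    exact hN n (le_trans (le_max_left _ _) hn)⟩

lemma cubeFun_mem (r : ℕ) (x : HX ν) (g : Fin r → Fin ν) : cubeFun r x g ∈ cube ν r x :=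
  fun n hn => dif_neg (by omega)

def cubeEquiv (r : ℕ) (x : HX ν) : cube ν r x ≃ (Fin r → Fin ν) where
  toFun y i := y.1.1 i
  invFun g := ⟨cubeFun r x g, cubeFun_mem r x g⟩
  left_inv y := by
    apply Subtype.ext; apply HXext; intro n
    by_cases h : n < r
    · simp [cubeFun, h]
    · simp only [cubeFun, dif_neg h]
      exact (y.2 n (by omega)).symm
  right_inv g := by
    funext i
    simp [cubeFun, i.2]

instance cubeFintype (r : ℕ) (x : HX ν) : Fintype (cube ν r x) :=
  Fintype.ofEquiv _ (cubeEquiv r x).symm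

lemma card_cube (r : ℕ) (x : HX ν) : Fintype.card (cube ν r x) = ν ^ r := by
  rw [Fintype.card_congr (cubeEquiv r x)]
  simp [Fintype.card_fun]

lemma cubeSum_eq_sum (r : ℕ) (x : HX ν) (ψ : Hl2 ν) :
    cubeSum ν r x ψ = ∑ y : cube ν r x, ψ y.1 := tsum_fintype _

lemma cubeSum_sub (r : ℕ) (x : HX ν) (ψ φ : Hl2 ν) :
    cubeSum ν r x (ψ - φ) = cubeSum ν r x ψ - cubeSum ν r x φ := by
  simp only [cubeSum_eq_sum, lp.coeFn_sub, Pi.sub_apply, Finset.sum_sub_distrib]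

lemma cubeSum_smul (r : ℕ) (x : HX ν) (c : ℝ) (ψ : Hl2 ν) :
    cubeSum ν r x (c • ψ) = c * cubeSum ν r x ψ := by
  simp only [cubeSum_eq_sum, lp.coeFn_smul, Pi.smul_apply, smul_eq_mul, Finset.mul_sum]

end HL
namespace HL
attribute [local instance] Classical.propDecidable
variable {ν : ℕ}

lemma memℓp_two_iff {f : HX ν → ℝ} : Memℓp f 2 ↔ Summable (fun y => f y ^ 2) := by
  rw [memℓp_gen_iff (by norm_num : 0 < (2 : ℝ≥0∞).toReal)]
  constructor <;> intro h <;> apply h.congr <;> intro y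
  · rw [show ((2:ℝ≥0∞)).toReal = ((2:ℕ):ℝ) by norm_num, Real.rpow_natCast]
    rw [Real.norm_eq_abs, sq_abs]
  · rw [show ((2:ℝ≥0∞)).toReal = ((2:ℕ):ℝ) by norm_num, Real.rpow_natCast]
    rw [Real.norm_eq_abs, sq_abs]

lemma norm_sq_eq (ψ : Hl2 ν) : ‖ψ‖ ^ 2 = ∑' y, (ψ y) ^ 2 := by
  have h := lp.norm_rpow_eq_tsum (p := 2) (by norm_num) ψ
  rw [show ((2:ℝ≥0∞)).toReal = ((2:ℕ):ℝ) by norm_num] at h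
  rw [Real.rpow_natCast] at h
  rw [h]
  congr 1; funext y
  rw [Real.rpow_natCast, Real.norm_eq_abs, sq_abs]

lemma summable_sq (ψ : Hl2 ν) : Summable (fun y => (ψ y) ^ 2) :=
  memℓp_two_iff.mp (ψ.2)

lemma memℓp_indicator (s : Set (HX ν)) (hs : s.Finite) :
    Memℓp (s.indicator (fun _ => (1:ℝ))) 2 := by
  apply memℓp_gen
  apply summable_of_ne_finset_zero (s := hs.toFinset)
  intro y hy
  rw [Set.indicator_of_notMem (by simpa using hy)]
  simp only [norm_zero]
  rw [Real.zero_rpow (by norm_num)]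

def chi (r : ℕ) (x : HX ν) : Hl2 ν :=
  ⟨(cube ν r x).indicator (fun _ => (1:ℝ)), memℓp_indicator _ (Set.toFinite _)⟩

lemma chi_apply (r : ℕ) (x : HX ν) (y : HX ν) :
    chi r x y = (cube ν r x).indicator (fun _ => (1:ℝ)) y := rfl

lemma chi_apply_mem {r : ℕ} {x y : HX ν} (h : y ∈ cube ν r x) : chi r x y = 1 := by
  rw [chi_apply, Set.indicator_of_mem h]

lemma chi_apply_not_mem {r : ℕ} {x y : HX ν} (h : y ∉ cube ν r x) : chi r x y = 0 := by
  rw [chi_apply, Set.indicator_of_notMem h]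

lemma tsum_indicator_cube (r : ℕ) (x : HX ν) :
    ∑' y : HX ν, (cube ν r x).indicator (fun _ => (1:ℝ)) y = (ν : ℝ) ^ r := by
  rw [← tsum_subtype (cube ν r x) (fun _ => (1:ℝ)), tsum_fintype]
  simp [card_cube r x]

/-- The key combinatorial evaluation. -/
lemma cubeSum_chi (t s : ℕ) (z x : HX ν) :
    cubeSum ν t z (chi s x)
      = if z ∈ cube ν (max t s) x then (ν : ℝ) ^ (min t s) else 0 := by
  have key : cubeSum ν t z (chi s x)
      = ∑' y : HX ν, (cube ν t z ∩ cube ν s x).indicator (fun _ => (1:ℝ)) y := by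
    rw [cubeSum, tsum_subtype (cube ν t z) (fun y => chi s x y)]
    congr 1; funext y
    by_cases h1 : y ∈ cube ν t z <;> by_cases h2 : y ∈ cube ν s x <;>
      simp [Set.indicator_apply, h1, h2, chi_apply_mem, chi_apply_not_mem]
  by_cases hz : z ∈ cube ν (max t s) x
  · rw [if_pos hz]
    rcases le_total t s with hts | hst
    · have hmax : max t s = s := max_eq_right hts
      have hmin : min t s = t := min_eq_left hts
      rw [hmax] at hz
      have hset : cube ν t z ∩ cube ν s x = cube ν t z := by
        apply Set.inter_eq_left.mpr
        intro y hy n hn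
        exact (hy n (hts.trans hn)).trans (hz n hn)
      rw [key, hset, tsum_indicator_cube, hmin]
    · have hmax : max t s = t := max_eq_left hst
      have hmin : min t s = s := min_eq_right hst
      rw [hmax] at hz
      have hset : cube ν t z ∩ cube ν s x = cube ν s x := by
        apply Set.eq_of_subset_of_subset
        · exact Set.inter_subset_right
        · intro y hy
          refine ⟨fun n hn => ?_, hy⟩
          exact (hy n (hst.trans hn)).trans (hz n hn).symm
      rw [key, hset, tsum_indicator_cube, hmin]
  · rw [if_neg hz, key]
    have hset : cube ν t z ∩ cube ν s x = ∅ := by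
      rw [Set.eq_empty_iff_forall_notMem]
      rintro y ⟨h1, h2⟩
      exact hz (fun n hn => ((h1 n (le_trans (le_max_left _ _) hn)).symm.trans
        (h2 n (le_trans (le_max_right _ _) hn))))
    rw [hset]
    simp

lemma norm_chi_sq (r : ℕ) (x : HX ν) : ‖chi r x‖ ^ 2 = (ν : ℝ) ^ r := by
  rw [norm_sq_eq, ← tsum_indicator_cube r x]
  congr 1; funext y
  by_cases h : y ∈ cube ν r x <;> simp [chi_apply_mem, chi_apply_not_mem, h, Set.indicator_apply]

lemma norm_chi (hν : 1 ≤ ν) (r : ℕ) (x : HX ν) : ‖chi r x‖ = Real.sqrt ν ^ r := by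
  have h1 : (0:ℝ) ≤ ν := by positivity
  have h2 : (Real.sqrt ν ^ r) ^ 2 = (ν:ℝ) ^ r := by
    rw [← pow_mul, mul_comm, pow_mul, Real.sq_sqrt h1]
  have h3 := norm_chi_sq r x
  nlinarith [norm_nonneg (chi r x), Real.sqrt_nonneg (ν:ℝ), pow_nonneg (Real.sqrt_nonneg (ν:ℝ)) r]

end HL
namespace HL
attribute [local instance] Classical.propDecidable
variable {ν : ℕ}

def evec (r : ℕ) (x : HX ν) : Hl2 ν :=
  ((ν:ℝ) ^ r)⁻¹ • chi r x - ((ν:ℝ) ^ (r+1))⁻¹ • chi (r+1) x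

lemma evec_apply (r : ℕ) (x y : HX ν) :
    evec r x y = ((ν:ℝ)^r)⁻¹ * chi r x y - ((ν:ℝ)^(r+1))⁻¹ * chi (r+1) x y := by
  rw [evec]
  rw [lp.coeFn_sub]
  simp [lp.coeFn_smul]

lemma cubeSum_evec (t r : ℕ) (z x : HX ν) :
    cubeSum ν t z (evec r x)
      = ((ν:ℝ)^r)⁻¹ * (if z ∈ cube ν (max t r) x then (ν : ℝ) ^ (min t r) else 0)
        - ((ν:ℝ)^(r+1))⁻¹ * (if z ∈ cube ν (max t (r+1)) x then (ν : ℝ) ^ (min t (r+1)) else 0) := by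
  rw [evec, cubeSum_sub, cubeSum_smul, cubeSum_smul, cubeSum_chi, cubeSum_chi]

lemma delta_evec (hν : 2 ≤ ν) {p : ℝ} (hp0 : 0 < p) (hp1 : p < 1)
    {Δ : Hl2 ν →L[ℝ] Hl2 ν} (hΔ : IsHierLap ν p Δ) (r : ℕ) (x : HX ν) :
    Δ (evec r x) = (-(p ^ r)) • evec r x := by
  have hc0 : (0:ℝ) < (ν:ℝ) := by exact_mod_cast (by omega : 0 < ν)
  have hc0' : ((ν:ℝ)) ≠ 0 := ne_of_gt hc0
  have hp1' : (1:ℝ) - p ≠ 0 := by linarith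
  apply lp.ext; funext z
  rw [hΔ (evec r x) z]
  have hrhs : (((-(p ^ r)) • evec r x : Hl2 ν) : ∀ _ : HX ν, ℝ) z = -(p^r) * evec r x z := by
    rw [lp.coeFn_smul]; simp
  rw [hrhs]
  set V : ℝ := evec r x z with hV
  by_cases hz : z ∈ cube ν (r+1) x
  · -- z in the (r+1)-cube
    have hVval : V = ((ν:ℝ)^r)⁻¹ * (if z ∈ cube ν r x then 1 else 0) - ((ν:ℝ)^(r+1))⁻¹ := by
      rw [hV, evec_apply, chi_apply_mem hz]
      by_cases h : z ∈ cube ν r x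
      · rw [chi_apply_mem h, if_pos h]; ring
      · rw [chi_apply_not_mem h, if_neg h]; ring
    have hterm : ∀ m : ℕ,
        (1 - p) * p ^ m * (((ν : ℝ) ^ (m + 1))⁻¹ * cubeSum ν (m + 1) z (evec r x) - V)
        = (-(1-p) * V) * p ^ m + (if m < r then (1-p) * V * p ^ m else 0) := by
      intro m
      rcases lt_or_ge m r with hm | hm
      · -- m + 1 ≤ r
        rw [if_pos hm]
        have e1 : max (m+1) r = r := max_eq_right (by omega)
        have e2 : min (m+1) r = m+1 := min_eq_left (by omega)
        have e3 : max (m+1) (r+1) = r+1 := max_eq_right (by omega)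
        have e4 : min (m+1) (r+1) = m+1 := min_eq_left (by omega)
        rw [cubeSum_evec, e1, e2, e3, e4, if_pos hz, hVval]
        by_cases h : z ∈ cube ν r x
        · rw [if_pos h, if_pos h]
          field_simp
          ring
        · rw [if_neg h, if_neg h]
          field_simp
          ring
      · -- r ≤ m
        rw [if_neg (by omega)]
        have e1 : max (m+1) r = m+1 := max_eq_left (by omega)
        have e2 : min (m+1) r = r := min_eq_right (by omega)
        have e3 : max (m+1) (r+1) = m+1 := max_eq_left (by omega)
        have e4 : min (m+1) (r+1) = r+1 := min_eq_right (by omega)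
        have hz' : z ∈ cube ν (m+1) x := cube_mono (by omega) x hz
        rw [cubeSum_evec, e1, e2, e3, e4, if_pos hz', if_pos hz']
        field_simp
        ring
    rw [tsum_congr hterm]
    have hs1 : Summable (fun m : ℕ => (-(1-p) * V) * p ^ m) :=
      (summable_geometric_of_lt_one hp0.le hp1).mul_left _
    have hs2 : Summable (fun m : ℕ => if m < r then (1-p) * V * p ^ m else 0) :=
      summable_of_ne_finset_zero (s := Finset.range r)
        (fun m hm => by rw [if_neg (by simpa using hm)])
    rw [Summable.tsum_add hs1 hs2, tsum_mul_left, tsum_geometric_of_lt_one hp0.le hp1,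
      tsum_eq_sum (s := Finset.range r) (fun m hm => by rw [if_neg (by simpa using hm)])]
    have : ∑ m ∈ Finset.range r, (if m < r then (1-p) * V * p ^ m else 0)
        = (1-p) * V * ∑ m ∈ Finset.range r, p ^ m := by
      rw [Finset.mul_sum]
      apply Finset.sum_congr rfl
      intro m hm
      rw [if_pos (by simpa using hm)]
    rw [this, geom_sum_eq (by intro h; rw [h] at hp1; linarith : p ≠ 1)]
    have hp2 : p - 1 ≠ 0 := by intro h; apply hp1'; linarith
    field_simp
    ring
  · -- z outside the (r+1)-cube
    have hzr : z ∉ cube ν r x := fun h => hz (cube_mono (by omega) x h)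
    have hV0 : V = 0 := by
      rw [hV, evec_apply, chi_apply_not_mem hz, chi_apply_not_mem hzr]; ring
    have hterm : ∀ m : ℕ,
        (1 - p) * p ^ m * (((ν : ℝ) ^ (m + 1))⁻¹ * cubeSum ν (m + 1) z (evec r x) - V) = 0 := by
      intro m
      have hS : cubeSum ν (m+1) z (evec r x) = 0 := by
        rcases le_or_gt (m+1) (r+1) with hm | hm
        · have h1 : z ∉ cube ν (max (m+1) r) x := fun h =>
            hz (cube_mono (by omega : max (m+1) r ≤ r+1) x h)
          have h2 : z ∉ cube ν (max (m+1) (r+1)) x := by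
            rw [max_eq_right (by omega : m+1 ≤ r+1)]; exact hz
          rw [cubeSum_evec, if_neg h1, if_neg h2]; ring
        · have e1 : max (m+1) r = m+1 := max_eq_left (by omega)
          have e2 : min (m+1) r = r := min_eq_right (by omega)
          have e3 : max (m+1) (r+1) = m+1 := max_eq_left (by omega)
          have e4 : min (m+1) (r+1) = r+1 := min_eq_right (by omega)
          rw [cubeSum_evec, e1, e2, e3, e4]
          by_cases h : z ∈ cube ν (m+1) x
          · rw [if_pos h, if_pos h]
            field_simp; ring
          · rw [if_neg h, if_neg h]; ring
      rw [hS, hV0]; ring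
    rw [tsum_congr hterm, tsum_zero, hV0]
    ring

end HL
namespace HL
attribute [local instance] Classical.propDecidable
variable {ν : ℕ}

lemma cnu_pos (hν : 2 ≤ ν) : (0:ℝ) < (ν:ℝ) := by exact_mod_cast (by omega : 0 < ν)

lemma sqrt_pos' (hν : 2 ≤ ν) : (0:ℝ) < Real.sqrt ν := Real.sqrt_pos.mpr (cnu_pos hν)

lemma sqrt_inv_nonneg (hν : 2 ≤ ν) : (0:ℝ) ≤ (Real.sqrt ν)⁻¹ := by positivity

lemma sqrt_inv_lt_one (hν : 2 ≤ ν) : (Real.sqrt (ν:ℝ))⁻¹ < 1 := by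
  rw [inv_lt_one_iff₀]
  right
  have : (1:ℝ) < (ν:ℝ) := by exact_mod_cast (by omega : 1 < ν)
  nlinarith [Real.sq_sqrt (by linarith : (0:ℝ) ≤ (ν:ℝ)), sqrt_pos' hν,
    Real.sqrt_nonneg (ν:ℝ)]

lemma pow_chi_eq (hν : 2 ≤ ν) (r : ℕ) :
    ((ν:ℝ)^r)⁻¹ * Real.sqrt ν ^ r = ((Real.sqrt (ν:ℝ))⁻¹) ^ r := by
  have h : (Real.sqrt (ν:ℝ)) ^ r * (Real.sqrt (ν:ℝ)) ^ r = (ν:ℝ) ^ r := by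
    rw [← mul_pow, Real.mul_self_sqrt (cnu_pos hν).le]
  have hs := sqrt_pos' hν
  rw [← h, inv_pow]
  field_simp

lemma norm_evec_le (hν : 2 ≤ ν) (r : ℕ) (x : HX ν) :
    ‖evec r x‖ ≤ 2 * ((Real.sqrt (ν:ℝ))⁻¹) ^ r := by
  have hc := cnu_pos hν
  have h1 : ‖((ν:ℝ) ^ r)⁻¹ • chi r x‖ = ((Real.sqrt (ν:ℝ))⁻¹) ^ r := by
    rw [norm_smul, Real.norm_eq_abs, abs_of_pos (by positivity), norm_chi (by omega)]
    exact pow_chi_eq hν r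
  have h2 : ‖((ν:ℝ) ^ (r+1))⁻¹ • chi (r+1) x‖ = ((Real.sqrt (ν:ℝ))⁻¹) ^ (r+1) := by
    rw [norm_smul, Real.norm_eq_abs, abs_of_pos (by positivity), norm_chi (by omega)]
    exact pow_chi_eq hν (r+1)
  calc ‖evec r x‖ ≤ ‖((ν:ℝ) ^ r)⁻¹ • chi r x‖ + ‖((ν:ℝ) ^ (r+1))⁻¹ • chi (r+1) x‖ :=
        norm_sub_le _ _
    _ = ((Real.sqrt (ν:ℝ))⁻¹) ^ r + ((Real.sqrt (ν:ℝ))⁻¹) ^ (r+1) := by rw [h1, h2]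
    _ ≤ 2 * ((Real.sqrt (ν:ℝ))⁻¹) ^ r := by
        have : ((Real.sqrt (ν:ℝ))⁻¹) ^ (r+1) ≤ ((Real.sqrt (ν:ℝ))⁻¹) ^ r :=
          pow_le_pow_of_le_one (sqrt_inv_nonneg hν) (sqrt_inv_lt_one hν).le (by omega)
        linarith

lemma summable_norm_coef_evec (hν : 2 ≤ ν) (x : HX ν) {coef : ℕ → ℝ} {C : ℝ}
    (h : ∀ r, |coef r| ≤ C) :
    Summable (fun r => ‖coef r • evec r x‖) := by
  have hC : 0 ≤ C := le_trans (abs_nonneg _) (h 0)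
  apply Summable.of_nonneg_of_le (fun r => norm_nonneg _)
    (fun r => ?_) (((summable_geometric_of_lt_one (sqrt_inv_nonneg hν)
      (sqrt_inv_lt_one hν))).mul_left (C * 2))
  rw [norm_smul, Real.norm_eq_abs]
  calc |coef r| * ‖evec r x‖ ≤ C * (2 * ((Real.sqrt (ν:ℝ))⁻¹) ^ r) :=
      mul_le_mul (h r) (norm_evec_le hν r x) (norm_nonneg _) hC
    _ = C * 2 * ((Real.sqrt (ν:ℝ))⁻¹) ^ r := by ring

lemma summable_coef_evec (hν : 2 ≤ ν) (x : HX ν) {coef : ℕ → ℝ} {C : ℝ}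
    (h : ∀ r, |coef r| ≤ C) :
    Summable (fun r => coef r • evec r x) :=
  (summable_norm_coef_evec hν x h).of_norm

lemma summable_evec (hν : 2 ≤ ν) (x : HX ν) : Summable (fun r => evec r x) := by
  have := summable_coef_evec hν x (coef := fun _ => (1:ℝ)) (C := 1)
    (fun r => by simp)
  simpa using this

lemma mem_cube_zero {x y : HX ν} : y ∈ cube ν 0 x ↔ y = x := by
  constructor
  · intro h; exact HXext (fun n => h n (Nat.zero_le n))
  · rintro rfl; exact self_mem_cube 0 _

lemma chi_zero (x : HX ν) : chi 0 x = hdelta ν x := by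
  apply lp.ext; funext y
  by_cases h : y = x
  · subst h
    rw [chi_apply_mem (self_mem_cube 0 y), hdelta, lp.single_apply_self]
  · rw [chi_apply_not_mem (fun hc => h (mem_cube_zero.mp hc)), hdelta,
      lp.single_apply_ne _ _ _ h]

lemma hasSum_evec (hν : 2 ≤ ν) (x : HX ν) : HasSum (fun r => evec r x) (hdelta ν x) := by
  have hsum := summable_evec hν x
  rw [hsum.hasSum_iff_tendsto_nat]
  have htel : ∀ n, ∑ i ∈ Finset.range n, evec i x
      = ((ν:ℝ)^0)⁻¹ • chi 0 x - ((ν:ℝ)^n)⁻¹ • chi n x :=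
    fun n => Finset.sum_range_sub' (fun i => ((ν:ℝ)^i)⁻¹ • chi i x) n
  simp only [htel]
  have h0 : ((ν:ℝ)^0)⁻¹ • chi 0 x = hdelta ν x := by
    rw [pow_zero, inv_one, one_smul, chi_zero]
  rw [h0]
  have : Tendsto (fun n => ((ν:ℝ)^n)⁻¹ • chi n x) atTop (nhds 0) := by
    apply squeeze_zero_norm (fun n => ?_)
      (tendsto_pow_atTop_nhds_zero_of_lt_one (sqrt_inv_nonneg hν) (sqrt_inv_lt_one hν))
    rw [norm_smul, Real.norm_eq_abs, abs_of_pos (by have := cnu_pos hν; positivity),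
      norm_chi (by omega)]
    exact le_of_eq (pow_chi_eq hν n)
  simpa using tendsto_const_nhds.sub this

lemma evec_apply_self (r : ℕ) (x : HX ν) :
    evec r x x = ((ν:ℝ)^r)⁻¹ - ((ν:ℝ)^(r+1))⁻¹ := by
  rw [evec_apply, chi_apply_mem (self_mem_cube r x), chi_apply_mem (self_mem_cube (r+1) x)]
  ring

lemma inner_hdelta (f : Hl2 ν) (x : HX ν) : @inner ℝ _ _ f (hdelta ν x) = f x := by
  rw [hdelta, real_inner_comm, lp.inner_single_left]
  simp

end HL
namespace HL
attribute [local instance] Classical.propDecidable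
variable {ν : ℕ}

def tailEquiv (s : ℕ) : HX ν ≃ ((Fin s → Fin ν) × HX ν) where
  toFun y := (fun i => y.1 i, ⟨fun n => y.1 (n + s), by
    obtain ⟨N, hN⟩ := y.2; exact ⟨N, fun n hn => hN (n+s) (by omega)⟩⟩)
  invFun w := ⟨fun n => if h : n < s then w.1 ⟨n, h⟩ else w.2.1 (n - s), by
    obtain ⟨N, hN⟩ := w.2.2
    refine ⟨N + s, fun n hn => ?_⟩
    simp only [dif_neg (by omega : ¬ n < s)]
    exact hN (n - s) (by omega)⟩
  left_inv y := by
    apply HXext; intro n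
    by_cases h : n < s
    · simp [h]
    · simp only [dif_neg h]
      have e1 : n - s + s = n := by omega
      rw [e1]
  right_inv w := by
    refine Prod.ext (funext fun i => ?_) (HXext fun n => ?_)
    · simp [i.2]
    · simp only [dif_neg (by omega : ¬ n + s < s)]
      have e1 : n + s - s = n := by omega
      rw [e1]

lemma cubeFun_tail (s : ℕ) (w : (Fin s → Fin ν) × HX ν) (g' : Fin s → Fin ν) :
    cubeFun s ((tailEquiv s).symm w) g' = (tailEquiv s).symm (g', w.2) := by
  apply HXext; intro n
  have e1 : ((tailEquiv s).symm (g', w.2)).1 n = if h : n < s then g' ⟨n, h⟩ else w.2.1 (n - s) := rfl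
  have e2 : ((tailEquiv s).symm w).1 n = if h : n < s then w.1 ⟨n, h⟩ else w.2.1 (n - s) := rfl
  by_cases h : n < s
  · simp only [cubeFun, e1, e2, dif_pos h]
  · simp only [cubeFun, e1, e2, dif_neg h]

lemma cubeSum_symm (s : ℕ) (ψ : Hl2 ν) (w : (Fin s → Fin ν) × HX ν) :
    cubeSum ν s ((tailEquiv s).symm w) ψ
      = ∑ g' : Fin s → Fin ν, ψ ((tailEquiv s).symm (g', w.2)) := by
  rw [cubeSum_eq_sum]
  rw [← Equiv.sum_comp (cubeEquiv s ((tailEquiv s).symm w)).symm (fun y => ψ y.1)]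
  apply Finset.sum_congr rfl
  intro g' _
  have : ((cubeEquiv s ((tailEquiv s).symm w)).symm g').1
      = cubeFun s ((tailEquiv s).symm w) g' := rfl
  rw [this, cubeFun_tail]

set_option maxHeartbeats 1000000 in
lemma summable_P_sq (hν : 2 ≤ ν) (s : ℕ) (ψ : Hl2 ν) :
    Summable (fun y : HX ν => (((ν:ℝ)^s)⁻¹ * cubeSum ν s y ψ)^2) ∧
    ∑' y : HX ν, (((ν:ℝ)^s)⁻¹ * cubeSum ν s y ψ)^2 ≤ ‖ψ‖^2 := by
  have hc := cnu_pos hν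
  have hcs : (0:ℝ) < (ν:ℝ)^s := by positivity
  set e := tailEquiv (ν := ν) s with he
  set F : ((Fin s → Fin ν) × HX ν) → ℝ := fun w => ψ (e.symm w) with hF
  set G : HX ν → ℝ := fun y => (((ν:ℝ)^s)⁻¹ * cubeSum ν s y ψ)^2 with hG
  have hF2 : Summable (fun w => F w ^ 2) :=
    (Equiv.summable_iff e.symm).mpr (summable_sq ψ)
  have hslice : ∀ g, Summable (fun z => F (g, z) ^ 2) := fun g => hF2.prod_factor g
  set B : ((Fin s → Fin ν) × HX ν) → ℝ :=
    fun w => ((ν:ℝ)^s)⁻¹ * ∑ g' : Fin s → Fin ν, F (g', w.2) ^ 2 with hB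
  have hBnn : 0 ≤ B := by
    intro w
    apply mul_nonneg (by positivity)
    exact Finset.sum_nonneg (fun g' _ => sq_nonneg _)
  have hBsum : Summable B := by
    rw [summable_prod_of_nonneg hBnn]
    constructor
    · intro g
      apply Summable.mul_left
      exact summable_sum (fun g' _ => hslice g')
    · exact Summable.of_finite
  have hcard : ((Finset.univ : Finset (Fin s → Fin ν)).card : ℝ) = (ν:ℝ)^s := by
    rw [Finset.card_univ]
    rw [Fintype.card_fun]
    push_cast
    simp
  have hGB : ∀ w, G (e.symm w) ≤ B w := by
    intro w
    have hkey : cubeSum ν s (e.symm w) ψ = ∑ g' : Fin s → Fin ν, F (g', w.2) :=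
      cubeSum_symm s ψ w
    have hcs2 := sq_sum_le_card_mul_sum_sq
      (s := (Finset.univ : Finset (Fin s → Fin ν))) (f := fun g' => F (g', w.2))
    rw [hcard] at hcs2
    simp only [hG, hB]
    rw [hkey, mul_pow]
    rw [show (((ν:ℝ)^s)⁻¹)^2 = ((ν:ℝ)^s)⁻¹ * ((ν:ℝ)^s)⁻¹ from sq _]
    rw [mul_assoc]
    apply mul_le_mul_of_nonneg_left _ (by positivity)
    calc ((ν:ℝ)^s)⁻¹ * (∑ g' : Fin s → Fin ν, F (g', w.2))^2
        ≤ ((ν:ℝ)^s)⁻¹ * ((ν:ℝ)^s * ∑ g' : Fin s → Fin ν, F (g', w.2)^2) :=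
          mul_le_mul_of_nonneg_left hcs2 (by positivity)
      _ = ∑ g' : Fin s → Fin ν, F (g', w.2)^2 := by field_simp
  have hGsum' : Summable (fun w => G (e.symm w)) :=
    Summable.of_nonneg_of_le (fun w => sq_nonneg _) hGB hBsum
  have hGsum : Summable G := (Equiv.summable_iff e.symm).mp hGsum'
  refine ⟨hGsum, ?_⟩
  have h1 : ∑' y, G y = ∑' w, G (e.symm w) := (Equiv.tsum_eq e.symm G).symm
  have h2 : ∑' w, G (e.symm w) ≤ ∑' w, B w := Summable.tsum_le_tsum hGB hGsum' hBsum
  have h3 : ∑' w, B w = ‖ψ‖^2 := by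
    rw [Summable.tsum_prod' hBsum (fun b => hBsum.prod_factor b)]
    have hz : ∀ g : Fin s → Fin ν, ∑' z : HX ν, B (g, z)
        = ((ν:ℝ)^s)⁻¹ * ∑ g' : Fin s → Fin ν, ∑' z : HX ν, F (g', z)^2 := by
      intro g
      rw [hB]
      simp only
      rw [tsum_mul_left]
      congr 1
      exact Summable.tsum_finsetSum (fun g' _ => hslice g')
    rw [tsum_fintype]
    rw [Finset.sum_congr rfl (fun g _ => hz g)]
    rw [Finset.sum_const, Finset.card_univ]
    have h4 : ∑ g' : Fin s → Fin ν, ∑' z : HX ν, F (g', z)^2 = ‖ψ‖^2 := by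
      have h5 : ∑' w : ((Fin s → Fin ν) × HX ν), F w ^ 2
          = ∑ g' : Fin s → Fin ν, ∑' z : HX ν, F (g', z)^2 := by
        rw [Summable.tsum_prod' hF2 (fun b => hF2.prod_factor b), tsum_fintype]
      rw [← h5]
      rw [Equiv.tsum_eq e.symm (fun y => ψ y ^2)]
      exact (norm_sq_eq ψ).symm
    rw [h4]
    rw [nsmul_eq_mul]
    have : ((Fintype.card (Fin s → Fin ν)) : ℝ) = (ν:ℝ)^s := by
      rw [Fintype.card_fun]; push_cast; simp
    rw [this]
    field_simp
  calc ∑' y, G y = ∑' w, G (e.symm w) := h1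
    _ ≤ ∑' w, B w := h2
    _ = ‖ψ‖^2 := h3

end HL
namespace HL
attribute [local instance] Classical.propDecidable
variable {ν : ℕ}

def Pop (hν : 2 ≤ ν) (s : ℕ) (ψ : Hl2 ν) : Hl2 ν :=
  ⟨fun y => ((ν:ℝ)^s)⁻¹ * cubeSum ν s y ψ,
    memℓp_two_iff.mpr (summable_P_sq hν s ψ).1⟩

lemma Pop_apply (hν : 2 ≤ ν) (s : ℕ) (ψ : Hl2 ν) (y : HX ν) :
    Pop hν s ψ y = ((ν:ℝ)^s)⁻¹ * cubeSum ν s y ψ := rfl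

lemma norm_Pop_le (hν : 2 ≤ ν) (s : ℕ) (ψ : Hl2 ν) : ‖Pop hν s ψ‖ ≤ ‖ψ‖ := by
  have h1 : ‖Pop hν s ψ‖^2 ≤ ‖ψ‖^2 := by
    rw [norm_sq_eq]
    exact (summable_P_sq hν s ψ).2
  nlinarith [norm_nonneg (Pop hν s ψ), norm_nonneg ψ]

lemma sum_sq_cube_le (s : ℕ) (y : HX ν) (ψ : Hl2 ν) :
    ∑ y' : cube ν s y, (ψ y'.1)^2 ≤ ‖ψ‖^2 := by
  rw [norm_sq_eq]
  rw [← tsum_fintype (L := SummationFilter.unconditional _), tsum_subtype (cube ν s y) (fun y' => (ψ y')^2)]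
  apply Summable.tsum_le_tsum _ ((summable_sq ψ).indicator _) (summable_sq ψ)
  intro y'
  by_cases h : y' ∈ cube ν s y
  · rw [Set.indicator_of_mem h]
  · rw [Set.indicator_of_notMem h]; exact sq_nonneg _

lemma abs_cubeSum_le (hν : 2 ≤ ν) (s : ℕ) (y : HX ν) (ψ : Hl2 ν) :
    |cubeSum ν s y ψ| ≤ Real.sqrt ν ^ s * ‖ψ‖ := by
  have hc := cnu_pos hν
  have h1 := sq_sum_le_card_mul_sum_sq
    (s := (Finset.univ : Finset (cube ν s y))) (f := fun y' => ψ y'.1)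
  have hcard : (((Finset.univ : Finset (cube ν s y))).card : ℝ) = (ν:ℝ)^s := by
    rw [Finset.card_univ, card_cube]
    push_cast; simp
  rw [hcard] at h1
  have h2 := sum_sq_cube_le s y ψ
  have h3 : (cubeSum ν s y ψ)^2 ≤ (ν:ℝ)^s * ‖ψ‖^2 := by
    rw [cubeSum_eq_sum]
    calc (∑ y' : cube ν s y, ψ y'.1)^2 ≤ (ν:ℝ)^s * ∑ y' : cube ν s y, (ψ y'.1)^2 := h1
      _ ≤ (ν:ℝ)^s * ‖ψ‖^2 := by
          apply mul_le_mul_of_nonneg_left h2 (by positivity)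
  have h4 : (Real.sqrt ν ^ s * ‖ψ‖)^2 = (ν:ℝ)^s * ‖ψ‖^2 := by
    rw [mul_pow, ← pow_mul, mul_comm s 2, pow_mul, Real.sq_sqrt hc.le]
  nlinarith [abs_nonneg (cubeSum ν s y ψ), sq_abs (cubeSum ν s y ψ),
    mul_nonneg (pow_nonneg (Real.sqrt_nonneg (ν:ℝ)) s) (norm_nonneg ψ)]

/-- Coordinate evaluation as a continuous linear map. -/
def evalCLM (y : HX ν) : Hl2 ν →L[ℝ] ℝ :=
  LinearMap.mkContinuous
    { toFun := fun f => f y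
      map_add' := fun f g => rfl
      map_smul' := fun c f => rfl } 1
    (fun f => by
      show ‖f y‖ ≤ 1 * ‖f‖
      simpa using lp.norm_apply_le_norm (by norm_num : (2:ℝ≥0∞) ≠ 0) f y)

lemma evalCLM_apply (y : HX ν) (f : Hl2 ν) : evalCLM y f = f y := rfl

lemma one_add_delta_eq (hν : 2 ≤ ν) {p : ℝ} (hp0 : 0 < p) (hp1 : p < 1)
    {Δ : Hl2 ν →L[ℝ] Hl2 ν} (hΔ : IsHierLap ν p Δ) (ψ : Hl2 ν) :
    ψ + Δ ψ = ∑' m : ℕ, ((1-p) * p^m) • Pop hν (m+1) ψ := by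
  have hc := cnu_pos hν
  have hq0 := sqrt_inv_nonneg hν
  have hq1 := sqrt_inv_lt_one hν
  have hsummand : Summable (fun m : ℕ => ((1-p) * p^m) • Pop hν (m+1) ψ) := by
    apply Summable.of_norm
    apply Summable.of_nonneg_of_le (fun m => norm_nonneg _) (fun m => ?_)
      ((summable_geometric_of_lt_one hp0.le hp1).mul_left ((1-p) * ‖ψ‖))
    rw [norm_smul, Real.norm_eq_abs, abs_of_pos (mul_pos (by linarith : (0:ℝ) < 1-p) (pow_pos hp0 m))]
    calc (1-p) * p^m * ‖Pop hν (m+1) ψ‖ ≤ (1-p) * p^m * ‖ψ‖ := by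
          apply mul_le_mul_of_nonneg_left (norm_Pop_le hν (m+1) ψ) (by nlinarith [pow_pos hp0 m])
      _ = (1-p) * ‖ψ‖ * p^m := by ring
  apply lp.ext; funext y
  have hlhs : ((ψ + Δ ψ : Hl2 ν) : ∀ _ : HX ν, ℝ) y = ψ y + Δ ψ y := by
    rw [lp.coeFn_add]; rfl
  rw [hlhs, hΔ ψ y]
  -- RHS evaluation
  have hrhs : ((∑' m : ℕ, ((1-p) * p^m) • Pop hν (m+1) ψ : Hl2 ν) : ∀ _ : HX ν, ℝ) y
      = ∑' m : ℕ, (1-p) * p^m * (((ν:ℝ)^(m+1))⁻¹ * cubeSum ν (m+1) y ψ) := by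
    have := (evalCLM (ν := ν) y).map_tsum hsummand
    rw [← evalCLM_apply y, this]
    exact tsum_congr (fun m => by rw [_root_.map_smul]; rfl)
  rw [hrhs]
  -- now scalar identity
  have hBsum : Summable (fun m : ℕ => (1-p) * p^m * (((ν:ℝ)^(m+1))⁻¹ * cubeSum ν (m+1) y ψ)) := by
    apply Summable.of_norm
    apply Summable.of_nonneg_of_le (fun m => norm_nonneg _) (fun m => ?_)
      ((summable_geometric_of_lt_one (mul_nonneg hp0.le (sqrt_inv_nonneg hν))
        (by nlinarith [sqrt_inv_lt_one hν, sqrt_inv_nonneg hν] : p * (Real.sqrt ν)⁻¹ < 1)).mul_left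
        ((1-p) * ((Real.sqrt ν)⁻¹ * ‖ψ‖)))
    rw [Real.norm_eq_abs, abs_mul, abs_mul, abs_mul,
      abs_of_pos (by linarith : (0:ℝ) < (1-p)),
      abs_of_pos (pow_pos hp0 m),
      abs_of_pos (by positivity : (0:ℝ) < (((ν:ℝ)^(m+1))⁻¹))]
    calc (1-p) * p^m * (((ν:ℝ)^(m+1))⁻¹ * |cubeSum ν (m+1) y ψ|)
        ≤ (1-p) * p^m * (((ν:ℝ)^(m+1))⁻¹ * (Real.sqrt ν ^ (m+1) * ‖ψ‖)) := by
          apply mul_le_mul_of_nonneg_left _ (by nlinarith [pow_pos hp0 m])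
          apply mul_le_mul_of_nonneg_left (abs_cubeSum_le hν (m+1) y ψ) (by positivity)
      _ = (1-p) * (((Real.sqrt ν)⁻¹) * ‖ψ‖) * (p * (Real.sqrt ν)⁻¹)^m := by
          rw [show ((ν:ℝ)^(m+1))⁻¹ * (Real.sqrt ν ^ (m+1) * ‖ψ‖)
              = (((Real.sqrt ν)⁻¹)^(m+1)) * ‖ψ‖ by
            rw [← pow_chi_eq hν (m+1)]; ring]
          rw [mul_pow]
          rw [pow_succ]
          ring
  have hconst : Summable (fun m : ℕ => (1-p) * p^m * ψ y) :=
    (((summable_geometric_of_lt_one hp0.le hp1).mul_left (1-p)).mul_right (ψ y))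
  have hsplit : ∀ m : ℕ, (1 - p) * p ^ m * (((ν:ℝ) ^ (m + 1))⁻¹ * cubeSum ν (m + 1) y ψ - ψ y)
      = (1-p) * p^m * (((ν:ℝ)^(m+1))⁻¹ * cubeSum ν (m+1) y ψ) - (1-p) * p^m * ψ y := by
    intro m; ring
  rw [tsum_congr hsplit, Summable.tsum_sub hBsum hconst]
  have hgeo : ∑' m : ℕ, (1-p) * p^m * ψ y = ψ y := by
    have : (fun m : ℕ => (1-p) * p^m * ψ y) = fun m : ℕ => ((1-p) * ψ y) * p^m := by
      funext m; ring
    rw [this, tsum_mul_left, tsum_geometric_of_lt_one hp0.le hp1]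
    have h1p : (1:ℝ) - p ≠ 0 := by linarith
    field_simp
  rw [hgeo]
  ring

lemma norm_one_add_delta (hν : 2 ≤ ν) {p : ℝ} (hp0 : 0 < p) (hp1 : p < 1)
    {Δ : Hl2 ν →L[ℝ] Hl2 ν} (hΔ : IsHierLap ν p Δ) (ψ : Hl2 ν) :
    ‖ψ + Δ ψ‖ ≤ ‖ψ‖ := by
  rw [one_add_delta_eq hν hp0 hp1 hΔ ψ]
  have hnorm : Summable (fun m : ℕ => ‖((1-p) * p^m) • Pop hν (m+1) ψ‖) := by
    apply Summable.of_nonneg_of_le (fun m => norm_nonneg _) (fun m => ?_)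
      ((summable_geometric_of_lt_one hp0.le hp1).mul_left ((1-p) * ‖ψ‖))
    rw [norm_smul, Real.norm_eq_abs, abs_of_pos (mul_pos (by linarith : (0:ℝ) < 1-p) (pow_pos hp0 m))]
    calc (1-p) * p^m * ‖Pop hν (m+1) ψ‖ ≤ (1-p) * p^m * ‖ψ‖ :=
        mul_le_mul_of_nonneg_left (norm_Pop_le hν (m+1) ψ) (by nlinarith [pow_pos hp0 m])
      _ = (1-p) * ‖ψ‖ * p^m := by ring
  calc ‖∑' m : ℕ, ((1-p) * p^m) • Pop hν (m+1) ψ‖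
      ≤ ∑' m : ℕ, ‖((1-p) * p^m) • Pop hν (m+1) ψ‖ := norm_tsum_le_tsum_norm hnorm
    _ ≤ ∑' m : ℕ, (1-p) * ‖ψ‖ * p^m := by
        apply Summable.tsum_le_tsum _ hnorm
          (((summable_geometric_of_lt_one hp0.le hp1).mul_left ((1-p) * ‖ψ‖)))
        intro m
        rw [norm_smul, Real.norm_eq_abs, abs_of_pos (mul_pos (by linarith : (0:ℝ) < 1-p) (pow_pos hp0 m))]
        calc (1-p) * p^m * ‖Pop hν (m+1) ψ‖ ≤ (1-p) * p^m * ‖ψ‖ :=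
            mul_le_mul_of_nonneg_left (norm_Pop_le hν (m+1) ψ) (by nlinarith [pow_pos hp0 m])
          _ = (1-p) * ‖ψ‖ * p^m := by ring
    _ = ‖ψ‖ := by
        rw [tsum_mul_left, tsum_geometric_of_lt_one hp0.le hp1]
        have h1p : (1:ℝ) - p ≠ 0 := by linarith
        field_simp

end HL
namespace HL
attribute [local instance] Classical.propDecidable
variable {ν : ℕ}

set_option maxHeartbeats 800000 in
set_option synthInstance.maxHeartbeats 800000 in
lemma isUnit_lam (hν : 2 ≤ ν) {p : ℝ} (hp0 : 0 < p) (hp1 : p < 1)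
    {Δ : Hl2 ν →L[ℝ] Hl2 ν} (hΔ : IsHierLap ν p Δ) {lam : ℝ} (hlam : 0 < lam) :
    IsUnit (lam • (1 : Hl2 ν →L[ℝ] Hl2 ν) - Δ) := by
  set T : Hl2 ν →L[ℝ] Hl2 ν := 1 + Δ with hT
  have hTnorm : ‖T‖ ≤ 1 := by
    apply ContinuousLinearMap.opNorm_le_bound _ zero_le_one
    intro ψ
    rw [one_mul, hT]
    have : ((1 + Δ : Hl2 ν →L[ℝ] Hl2 ν)) ψ = ψ + Δ ψ := by
      rw [ContinuousLinearMap.add_apply, ContinuousLinearMap.one_apply]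
    rw [this]
    exact norm_one_add_delta hν hp0 hp1 hΔ ψ
  have hnorm : ‖((1:ℝ)+lam)⁻¹ • T‖ < 1 := by
    rw [norm_smul (((1:ℝ)+lam)⁻¹) T, Real.norm_eq_abs, abs_of_pos (by positivity)]
    calc ((1:ℝ)+lam)⁻¹ * ‖T‖ ≤ ((1:ℝ)+lam)⁻¹ * 1 :=
        mul_le_mul_of_nonneg_left hTnorm (by positivity)
      _ < 1 := by
          rw [mul_one]
          rw [inv_lt_one_iff₀]
          right; linarith
  have hunit1 : IsUnit (1 - ((1:ℝ)+lam)⁻¹ • T) := isUnit_one_sub_of_norm_lt_one hnorm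
  have heq : lam • (1 : Hl2 ν →L[ℝ] Hl2 ν) - Δ
      = (((1:ℝ)+lam) • (1: Hl2 ν →L[ℝ] Hl2 ν)) * (1 - ((1:ℝ)+lam)⁻¹ • T) := by
    rw [smul_mul_assoc, one_mul, smul_sub, smul_smul,
      mul_inv_cancel₀ (by positivity : ((1:ℝ)+lam) ≠ 0), one_smul, hT, add_smul, one_smul]
    abel
  rw [heq]
  apply IsUnit.mul _ hunit1
  refine isUnit_iff_exists.mpr ⟨(((1:ℝ)+lam)⁻¹) • (1: Hl2 ν →L[ℝ] Hl2 ν), ?_, ?_⟩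
  · rw [smul_mul_assoc, mul_smul_comm, smul_smul,
      mul_inv_cancel₀ (by positivity : ((1:ℝ)+lam) ≠ 0), one_smul, mul_one]
  · rw [smul_mul_assoc, mul_smul_comm, smul_smul,
      inv_mul_cancel₀ (by positivity : ((1:ℝ)+lam) ≠ 0), one_smul, mul_one]

lemma tsum_coef_apply (hν : 2 ≤ ν) (x : HX ν) {coef : ℕ → ℝ} {C : ℝ}
    (h : ∀ r, |coef r| ≤ C) :
    ((∑' r : ℕ, coef r • evec r x : Hl2 ν) : ∀ _ : HX ν, ℝ) x
      = ∑' r : ℕ, coef r * (((ν:ℝ)^r)⁻¹ - ((ν:ℝ)^(r+1))⁻¹) := by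
  have hsum := summable_coef_evec hν x h
  have hmt := (evalCLM (ν := ν) x).map_tsum hsum
  rw [show ((∑' r : ℕ, coef r • evec r x : Hl2 ν) : ∀ _ : HX ν, ℝ) x
      = evalCLM x (∑' r : ℕ, coef r • evec r x) from rfl, hmt]
  exact tsum_congr (fun r => by
    rw [_root_.map_smul, smul_eq_mul, evalCLM_apply, evec_apply_self])

lemma resolv_repr (hν : 2 ≤ ν) {p : ℝ} (hp0 : 0 < p) (hp1 : p < 1)
    {Δ : Hl2 ν →L[ℝ] Hl2 ν} (hΔ : IsHierLap ν p Δ) {lam : ℝ} (hlam : 0 < lam) (x : HX ν) :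
    resolvK ν Δ lam x x
      = ∑' r : ℕ, (lam + p^r)⁻¹ * (((ν:ℝ)^r)⁻¹ - ((ν:ℝ)^(r+1))⁻¹) := by
  have hA := isUnit_lam hν hp0 hp1 hΔ hlam
  have hcoef : ∀ r : ℕ, |(lam + p^r)⁻¹| ≤ lam⁻¹ := by
    intro r
    have h1 : (0:ℝ) < lam + p^r := by nlinarith [pow_pos hp0 r]
    rw [abs_of_pos (by positivity)]
    apply inv_anti₀ hlam
    nlinarith [pow_pos hp0 r]
  have hsumw : Summable (fun r : ℕ => (lam + p^r)⁻¹ • evec r x) :=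
    summable_coef_evec hν x hcoef
  set w : Hl2 ν := ∑' r : ℕ, (lam + p^r)⁻¹ • evec r x with hw
  have hAw : (lam • (1 : Hl2 ν →L[ℝ] Hl2 ν) - Δ) w = hdelta ν x := by
    rw [hw, (lam • (1 : Hl2 ν →L[ℝ] Hl2 ν) - Δ).map_tsum hsumw]
    rw [← (hasSum_evec hν x).tsum_eq]
    apply tsum_congr
    intro r
    have h1 : (0:ℝ) < lam + p^r := by nlinarith [pow_pos hp0 r]
    rw [_root_.map_smul]
    have h2 : (lam • (1 : Hl2 ν →L[ℝ] Hl2 ν) - Δ) (evec r x) = (lam + p^r) • evec r x := by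
      rw [ContinuousLinearMap.sub_apply, ContinuousLinearMap.smul_apply,
        ContinuousLinearMap.one_apply, delta_evec hν hp0 hp1 hΔ, add_smul, neg_smul,
        sub_neg_eq_add]
    rw [h2, smul_smul, inv_mul_cancel₀ (ne_of_gt h1), one_smul]
  have hres : Ring.inverse (lam • (1 : Hl2 ν →L[ℝ] Hl2 ν) - Δ) (hdelta ν x) = w := by
    rw [← hAw]
    have hu : lam • (1 : Hl2 ν →L[ℝ] Hl2 ν) - Δ = ↑hA.unit := hA.unit_spec.symm
    rw [hu, Ring.inverse_unit, ← ContinuousLinearMap.mul_apply, Units.inv_mul,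
      ContinuousLinearMap.one_apply]
  have hstart : resolvK ν Δ lam x x
      = @inner ℝ _ _ (Ring.inverse (lam • (1 : Hl2 ν →L[ℝ] Hl2 ν) - Δ) (hdelta ν x))
          (hdelta ν x) := rfl
  rw [hstart, hres, inner_hdelta]
  exact tsum_coef_apply hν x hcoef

lemma exp_eigen (hν : 2 ≤ ν) {p : ℝ} (hp0 : 0 < p) (hp1 : p < 1)
    {Δ : Hl2 ν →L[ℝ] Hl2 ν} (hΔ : IsHierLap ν p Δ) (t : ℝ) (r : ℕ) (x : HX ν) :
    NormedSpace.exp (t • Δ) (evec r x) = Real.exp (-(t * p^r)) • evec r x := by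
  have hpow : ∀ n : ℕ, ((t • Δ)^n) (evec r x) = (-(t * p^r))^n • evec r x := by
    intro n
    induction n with
    | zero => simp
    | succ n ih =>
        rw [pow_succ, ContinuousLinearMap.mul_apply]
        have hA : (t • Δ) (evec r x) = (-(t * p^r)) • evec r x := by
          rw [ContinuousLinearMap.smul_apply, delta_evec hν hp0 hp1 hΔ, smul_smul]
          congr 1; ring
        rw [hA, _root_.map_smul, ih, smul_smul, pow_succ, mul_comm]
  have hsum := NormedSpace.expSeries_summable' (𝕂 := ℝ) (t • Δ)
  have happ := (ContinuousLinearMap.apply ℝ (Hl2 ν) (evec r x)).map_tsum hsum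
  rw [NormedSpace.exp_eq_tsum ℝ]
  have hstart : (∑' n : ℕ, ((n.factorial : ℝ))⁻¹ • (t • Δ)^n) (evec r x)
      = ∑' n : ℕ, (((n.factorial : ℝ))⁻¹ • (t • Δ)^n) (evec r x) := happ
  rw [hstart]
  have hterm : ∀ n : ℕ, (((n.factorial : ℝ))⁻¹ • (t • Δ)^n) (evec r x)
      = (((n.factorial : ℝ))⁻¹ * (-(t * p^r))^n) • evec r x := by
    intro n
    rw [ContinuousLinearMap.smul_apply, hpow n, smul_smul]
  rw [tsum_congr hterm]
  have hscal : Summable (fun n : ℕ => ((n.factorial : ℝ))⁻¹ * (-(t * p^r))^n) := by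
    have := NormedSpace.expSeries_summable' (𝕂 := ℝ) (𝔸 := ℝ) (-(t * p^r))
    simpa [smul_eq_mul] using this
  rw [Summable.tsum_smul_const hscal]
  congr 1
  have : Real.exp (-(t * p^r)) = NormedSpace.exp (-(t * p^r)) := by
    rw [Real.exp_eq_exp_ℝ]
  rw [this, NormedSpace.exp_eq_tsum ℝ]
  simp [smul_eq_mul]

lemma heatK_repr (hν : 2 ≤ ν) {p : ℝ} (hp0 : 0 < p) (hp1 : p < 1)
    {Δ : Hl2 ν →L[ℝ] Hl2 ν} (hΔ : IsHierLap ν p Δ) {t : ℝ} (ht : 0 ≤ t) (x : HX ν) :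
    heatK ν Δ t x x
      = ∑' r : ℕ, Real.exp (-(t * p^r)) * (((ν:ℝ)^r)⁻¹ - ((ν:ℝ)^(r+1))⁻¹) := by
  have hcoef : ∀ r : ℕ, |Real.exp (-(t * p^r))| ≤ 1 := by
    intro r
    rw [abs_of_pos (Real.exp_pos _)]
    rw [show (1:ℝ) = Real.exp 0 from (Real.exp_zero).symm]
    apply Real.exp_le_exp.mpr
    have := pow_pos hp0 r
    nlinarith
  have h1 : NormedSpace.exp (t • Δ) (hdelta ν x)
      = ∑' r : ℕ, Real.exp (-(t * p^r)) • evec r x := by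
    rw [← (hasSum_evec hν x).tsum_eq,
      (NormedSpace.exp (t • Δ)).map_tsum (summable_evec hν x)]
    exact tsum_congr (fun r => exp_eigen hν hp0 hp1 hΔ t r x)
  have hstart : heatK ν Δ t x x
      = @inner ℝ _ _ (NormedSpace.exp (t • Δ) (hdelta ν x)) (hdelta ν x) := rfl
  rw [hstart, h1, inner_hdelta]
  exact tsum_coef_apply hν x hcoef

end HL
namespace HL
variable {ν : ℕ}

lemma sh_iff (hν : 2 ≤ ν) {p : ℝ} (hp0 : 0 < p) (hp1 : p < 1) :
    (1 < p * ν ↔ 2 < sh ν p) := by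
  have hc1 : (1:ℝ) < ν := by exact_mod_cast (by omega : 1 < ν)
  have hlogp : Real.log p < 0 := Real.log_neg hp0 hp1
  have hL1 : 0 < Real.log (1/p) := by rw [one_div, Real.log_inv]; linarith
  have hlogν : 0 < Real.log ν := Real.log_pos hc1
  rw [sh, lt_div_iff₀ hL1, one_div, Real.log_inv]
  constructor
  · intro h
    have h2 : Real.log 1 < Real.log (p * ν) := Real.log_lt_log (by norm_num) h
    rw [Real.log_one, Real.log_mul (ne_of_gt hp0) (by positivity)] at h2
    linarith
  · intro h
    by_contra hle
    push_neg at hle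
    have h2 : Real.log (p * ν) ≤ 0 :=
      Real.log_nonpos (by positivity) hle
    rw [Real.log_mul (ne_of_gt hp0) (by positivity)] at h2
    linarith

def crv (ν : ℕ) (r : ℕ) : ℝ := ((ν:ℝ)^r)⁻¹ - ((ν:ℝ)^(r+1))⁻¹

lemma crv_eq (hν : 2 ≤ ν) (r : ℕ) : crv ν r = (1 - (ν:ℝ)⁻¹) * ((ν:ℝ)⁻¹)^r := by
  have hc := cnu_pos hν
  rw [crv]
  rw [pow_succ, mul_inv, inv_pow]
  ring

lemma inv_nu_lt_one (hν : 2 ≤ ν) : ((ν:ℝ))⁻¹ < 1 := by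
  rw [inv_lt_one_iff₀]; right; exact_mod_cast (by omega : 1 < ν)

lemma crv_pos (hν : 2 ≤ ν) (r : ℕ) : 0 < crv ν r := by
  rw [crv_eq hν]
  have hc := cnu_pos hν
  have h1 := inv_nu_lt_one hν
  have h2 : (0:ℝ) < (ν:ℝ)⁻¹ := by positivity
  have h3 : (0:ℝ) < ((ν:ℝ)⁻¹)^r := pow_pos h2 r
  nlinarith

lemma summable_crv (hν : 2 ≤ ν) : Summable (crv ν) := by
  apply Summable.congr _ (fun r => (crv_eq hν r).symm)
  exact (summable_geometric_of_lt_one (by positivity) (inv_nu_lt_one hν)).mul_left _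

lemma summable_inv_p_crv (hν : 2 ≤ ν) {p : ℝ} (hp0 : 0 < p) (h1 : 1 < p * ν) :
    Summable (fun r : ℕ => (p^r)⁻¹ * crv ν r) := by
  have hc := cnu_pos hν
  have heq : ∀ r : ℕ, (1 - (ν:ℝ)⁻¹) * ((p * (ν:ℝ))⁻¹)^r = (p^r)⁻¹ * crv ν r := by
    intro r
    rw [crv_eq hν, mul_inv, mul_pow, inv_pow, inv_pow]
    ring
  apply Summable.congr _ heq
  apply Summable.mul_left
  apply summable_geometric_of_lt_one (by positivity)
  rw [inv_lt_one_iff₀]; right; exact h1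

lemma tsum_inv_p_crv (hν : 2 ≤ ν) {p : ℝ} (hp0 : 0 < p) (h1 : 1 < p * ν) :
    ∑' r : ℕ, (p^r)⁻¹ * crv ν r = p * ((ν:ℝ) - 1) / (p * ν - 1) := by
  have hc := cnu_pos hν
  have heq : ∀ r : ℕ, (p^r)⁻¹ * crv ν r = (1 - (ν:ℝ)⁻¹) * ((p * (ν:ℝ))⁻¹)^r := by
    intro r
    rw [crv_eq hν, mul_inv, mul_pow, inv_pow, inv_pow]
    ring
  rw [tsum_congr heq, tsum_mul_left,
    tsum_geometric_of_lt_one (by positivity) (by rw [inv_lt_one_iff₀]; right; exact h1)]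
  have hpν : (0:ℝ) < p * ν := lt_trans one_pos h1
  have hden : p * (ν:ℝ) - 1 ≠ 0 := ne_of_gt (by linarith)
  have hden2 : 1 - (p * (ν:ℝ))⁻¹ ≠ 0 := by
    have : (p * (ν:ℝ))⁻¹ < 1 := by rw [inv_lt_one_iff₀]; right; exact h1
    linarith
  field_simp

end HL
open HL in
set_option maxHeartbeats 1000000 in
theorem stmt8 (ν : ℕ) (hν : 2 ≤ ν) (p : ℝ) (hp0 : 0 < p) (hp1 : p < 1)
    (Δ : Hl2 ν →L[ℝ] Hl2 ν) (hΔ : IsHierLap ν p Δ) :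
    (1 < p * ν ↔ 2 < sh ν p) ∧
    (1 < p * ν →
      ∀ x : HX ν,
        IntegrableOn (fun t => heatK ν Δ t x x) (Set.Ioi (0 : ℝ)) ∧
        ∫ t in Set.Ioi (0 : ℝ), heatK ν Δ t x x = p * (ν - 1) / (p * ν - 1) ∧
        Tendsto (fun lam => resolvK ν Δ lam x x) (nhdsWithin 0 (Set.Ioi 0))
          (nhds (p * (ν - 1) / (p * ν - 1)))) ∧
    (p * ν ≤ 1 →
      ∀ x : HX ν,
        Tendsto (fun lam => resolvK ν Δ lam x x) (nhdsWithin 0 (Set.Ioi 0)) atTop) := by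
  have hc := cnu_pos hν
  refine ⟨sh_iff hν hp0 hp1, ?_, ?_⟩
  · -- transient case
    intro h1 x
    -- heat kernel part
    set f : ℕ → ℝ → ℝ := fun r t => Real.exp (-(max t 0 * p^r)) * crv ν r with hf
    have hfnonneg : ∀ r t, 0 ≤ f r t :=
      fun r t => mul_nonneg (Real.exp_pos _).le (crv_pos hν r).le
    have hfcont : ∀ r, Continuous (f r) := by
      intro r
      apply Continuous.mul _ continuous_const
      apply Real.continuous_exp.comp
      exact ((continuous_id.max continuous_const).mul continuous_const).neg
    have hfbound : ∀ (r : ℕ) (t : ℝ), ‖f r t‖ ≤ crv ν r := by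
      intro r t
      rw [Real.norm_eq_abs, abs_mul, abs_of_pos (Real.exp_pos _),
        abs_of_pos (crv_pos hν r)]
      have hexp : Real.exp (-(max t 0 * p^r)) ≤ 1 := by
        rw [show (1:ℝ) = Real.exp 0 from Real.exp_zero.symm]
        apply Real.exp_le_exp.mpr
        have h2 : 0 ≤ max t 0 * p^r := mul_nonneg (le_max_right t 0) (pow_pos hp0 r).le
        linarith
      nlinarith [crv_pos hν r]
    have hHcont : Continuous (fun t => ∑' r, f r t) :=
      continuous_tsum hfcont (summable_crv hν) hfbound
    have hfint : ∀ r, IntegrableOn (f r) (Set.Ioi (0:ℝ)) := by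
      intro r
      apply MeasureTheory.IntegrableOn.congr_fun
        ((exp_neg_integrableOn_Ioi 0 (pow_pos hp0 r)).mul_const (crv ν r))
        ?_ measurableSet_Ioi
      intro t ht
      simp only [hf]
      rw [max_eq_left (le_of_lt ht)]
      ring_nf
    have hfval : ∀ r, ∫ t in Set.Ioi (0:ℝ), f r t = (p^r)⁻¹ * crv ν r := by
      intro r
      rw [MeasureTheory.setIntegral_congr_fun measurableSet_Ioi
        (show Set.EqOn (f r) (fun t => Real.exp (-(p^r * t)) * crv ν r) (Set.Ioi 0) by
          intro t ht
          simp only [hf]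
          rw [max_eq_left (le_of_lt ht)]
          ring_nf)]
      rw [MeasureTheory.integral_mul_const]
      have hcomp := MeasureTheory.integral_comp_mul_left_Ioi
        (fun u => Real.exp (-u)) 0 (pow_pos hp0 r)
      rw [mul_zero, integral_exp_neg_Ioi, neg_zero, Real.exp_zero] at hcomp
      rw [hcomp, smul_eq_mul, mul_one]
    have hnormint : Summable (fun r => ∫ t in Set.Ioi (0:ℝ), ‖f r t‖) := by
      apply Summable.congr (summable_inv_p_crv hν hp0 h1)
      intro r
      rw [← hfval r]
      apply MeasureTheory.setIntegral_congr_fun measurableSet_Ioi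
      intro t _
      exact (Real.norm_of_nonneg (hfnonneg r t)).symm
    have hsummable_t : ∀ t : ℝ, Summable (fun r => f r t) := by
      intro t
      apply Summable.of_nonneg_of_le (fun r => hfnonneg r t)
        (fun r => (Real.norm_of_nonneg (hfnonneg r t)) ▸ hfbound r t) (summable_crv hν)
    have haesm : AEStronglyMeasurable (fun t => ∑' r, f r t)
        (volume.restrict (Set.Ioi (0:ℝ))) :=
      hHcont.aestronglyMeasurable.restrict
    have hHnonneg : ∀ t : ℝ, 0 ≤ ∑' r, f r t :=
      fun t => tsum_nonneg (fun r => hfnonneg r t)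
    have hfin : HasFiniteIntegral (fun t => ∑' r, f r t)
        (volume.restrict (Set.Ioi (0:ℝ))) := by
      rw [MeasureTheory.hasFiniteIntegral_iff_norm]
      have hstep1 : ∫⁻ t, ENNReal.ofReal ‖∑' r, f r t‖ ∂(volume.restrict (Set.Ioi (0:ℝ)))
          = ∑' r, ∫⁻ t, ENNReal.ofReal (f r t) ∂(volume.restrict (Set.Ioi (0:ℝ))) := by
        rw [← MeasureTheory.lintegral_tsum
          (fun r => ((hfcont r).measurable.ennreal_ofReal).aemeasurable)]
        apply MeasureTheory.lintegral_congr
        intro t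
        rw [Real.norm_of_nonneg (hHnonneg t),
          ENNReal.ofReal_tsum_of_nonneg (fun r => hfnonneg r t) (hsummable_t t)]
      rw [hstep1]
      have hstep2 : ∀ r : ℕ, ∫⁻ t, ENNReal.ofReal (f r t) ∂(volume.restrict (Set.Ioi (0:ℝ)))
          = ENNReal.ofReal ((p^r)⁻¹ * crv ν r) := by
        intro r
        rw [← MeasureTheory.ofReal_integral_eq_lintegral_ofReal (hfint r)
          (MeasureTheory.ae_of_all _ (fun t => hfnonneg r t)), hfval r]
      rw [tsum_congr hstep2,
        ← ENNReal.ofReal_tsum_of_nonneg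
          (fun r => mul_nonneg (by positivity) (crv_pos hν r).le)
          (summable_inv_p_crv hν hp0 h1)]
      exact ENNReal.ofReal_lt_top
    have hHint : IntegrableOn (fun t => ∑' r, f r t) (Set.Ioi (0:ℝ)) := ⟨haesm, hfin⟩
    have heqon : Set.EqOn (fun t => ∑' r, f r t) (fun t => heatK ν Δ t x x)
        (Set.Ioi (0:ℝ)) := by
      intro t ht
      simp only
      rw [heatK_repr hν hp0 hp1 hΔ (le_of_lt ht) x]
      apply tsum_congr
      intro r
      simp only [hf]
      rw [max_eq_left (le_of_lt ht)]
      rfl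
    refine ⟨hHint.congr_fun heqon measurableSet_Ioi, ?_, ?_⟩
    · -- integral value
      rw [← MeasureTheory.setIntegral_congr_fun measurableSet_Ioi heqon]
      rw [← MeasureTheory.integral_tsum_of_summable_integral_norm hfint hnormint]
      rw [tsum_congr hfval]
      exact tsum_inv_p_crv hν hp0 h1
    · -- resolvent limit
      rw [show p * ((ν:ℝ) - 1) / (p * ν - 1) = ∑' r : ℕ, (p^r)⁻¹ * crv ν r from
        (tsum_inv_p_crv hν hp0 h1).symm]
      apply Tendsto.congr'
        (f₁ := fun lam => ∑' r : ℕ, (lam + p^r)⁻¹ * crv ν r)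
      · filter_upwards [self_mem_nhdsWithin] with lam hlam
        rw [resolv_repr hν hp0 hp1 hΔ hlam x]
        rfl
      · apply tendsto_tsum_of_dominated_convergence
          (bound := fun r : ℕ => (p^r)⁻¹ * crv ν r) (summable_inv_p_crv hν hp0 h1)
        · intro r
          have hlim : Tendsto (fun lam : ℝ => (lam + p^r)⁻¹ * crv ν r)
              (nhds 0) (nhds ((0 + p^r)⁻¹ * crv ν r)) := by
            apply Tendsto.mul_const
            apply Tendsto.inv₀
            · exact (continuous_id.add continuous_const).tendsto 0
            · rw [zero_add]; exact ne_of_gt (pow_pos hp0 r)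
          rw [zero_add] at hlim
          exact hlim.mono_left nhdsWithin_le_nhds
        · filter_upwards [self_mem_nhdsWithin] with lam hlam r
          have hl : (0:ℝ) < lam := hlam
          have hpr := pow_pos hp0 r
          rw [Real.norm_eq_abs, abs_mul, abs_of_pos (by positivity),
            abs_of_pos (crv_pos hν r)]
          apply mul_le_mul_of_nonneg_right _ (crv_pos hν r).le
          apply inv_anti₀ hpr
          linarith
  · -- recurrent case
    intro hle x
    rw [tendsto_atTop]
    intro M
    have hhalf : (0:ℝ) < (1 - (ν:ℝ)⁻¹)/2 := by
      have := inv_nu_lt_one hν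
      linarith
    obtain ⟨N, hN⟩ := exists_nat_ge (M / ((1 - (ν:ℝ)⁻¹)/2))
    have hMN : M ≤ (N:ℝ) * ((1 - (ν:ℝ)⁻¹)/2) := by
      rw [div_le_iff₀ hhalf] at hN
      linarith
    filter_upwards [Ioo_mem_nhdsGT_of_mem
      (show (0:ℝ) ∈ Set.Ico 0 (p^N) from ⟨le_refl 0, pow_pos hp0 N⟩)] with lam hlam
    obtain ⟨hl0, hlN⟩ := hlam
    rw [resolv_repr hν hp0 hp1 hΔ hl0 x]
    have htermpos : ∀ r : ℕ, (0:ℝ) < (lam + p^r)⁻¹ * crv ν r := by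
      intro r
      have := pow_pos hp0 r
      exact mul_pos (by positivity) (crv_pos hν r)
    have hsummlam : Summable (fun r : ℕ => (lam + p^r)⁻¹ * crv ν r) := by
      apply Summable.of_nonneg_of_le (fun r => (htermpos r).le)
        (fun r => ?_) ((summable_crv hν).mul_left lam⁻¹)
      apply mul_le_mul_of_nonneg_right _ (crv_pos hν r).le
      apply inv_anti₀ hl0
      nlinarith [pow_pos hp0 r]
    have hge : ∑ r ∈ Finset.range N, (lam + p^r)⁻¹ * crv ν r
        ≤ ∑' r : ℕ, (lam + p^r)⁻¹ * crv ν r :=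
      Summable.sum_le_tsum _ (fun r _ => (htermpos r).le) hsummlam
    have hlow : (N:ℝ) * ((1 - (ν:ℝ)⁻¹)/2)
        ≤ ∑ r ∈ Finset.range N, (lam + p^r)⁻¹ * crv ν r := by
      rw [show (N:ℝ) * ((1 - (ν:ℝ)⁻¹)/2)
          = ∑ _r ∈ Finset.range N, (1 - (ν:ℝ)⁻¹)/2 by
        rw [Finset.sum_const, Finset.card_range, nsmul_eq_mul]]
      apply Finset.sum_le_sum
      intro r hr
      have hrN : r < N := Finset.mem_range.mp hr
      have hpr := pow_pos hp0 r
      have hlamr : lam ≤ p^r := le_trans hlN.le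
        (pow_le_pow_of_le_one hp0.le hp1.le (by omega))
      have hinv : (2 * p^r)⁻¹ ≤ (lam + p^r)⁻¹ := by
        apply inv_anti₀ (by positivity)
        linarith
      have hterm : (2 * p^r)⁻¹ * crv ν r ≤ (lam + p^r)⁻¹ * crv ν r :=
        mul_le_mul_of_nonneg_right hinv (crv_pos hν r).le
      apply le_trans _ hterm
      rw [crv_eq hν]
      have hpc : (p * (ν:ℝ))^r ≤ 1 :=
        pow_le_one₀ (by positivity) hle
      have hpcr : p^r * ((ν:ℝ))^r ≤ 1 := by rwa [← mul_pow]
      have hcr : (0:ℝ) < ((ν:ℝ)⁻¹)^r := by positivity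
      have heq2 : (2 * p^r)⁻¹ * ((1 - (ν:ℝ)⁻¹) * ((ν:ℝ)⁻¹)^r)
          = (1 - (ν:ℝ)⁻¹)/2 * (p^r * ((ν:ℝ))^r)⁻¹ := by
        rw [inv_pow, mul_inv, mul_inv]
        ring
      rw [heq2]
      have hinv2 : (1:ℝ) ≤ (p^r * ((ν:ℝ))^r)⁻¹ := by
        rw [show (1:ℝ) = (1:ℝ)⁻¹ from inv_one.symm]
        apply inv_anti₀ (by positivity) hpcr
      nlinarith
    calc M ≤ (N:ℝ) * ((1 - (ν:ℝ)⁻¹)/2) := hMN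
      _ ≤ ∑ r ∈ Finset.range N, (lam + p^r)⁻¹ * crv ν r := hlow
      _ ≤ ∑' r : ℕ, (lam + p^r)⁻¹ * crv ν r := hge
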